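/- arXiv:2001.01881 — 2 statements merged into one kernel-verified Lean document; each statement's English description precedes it below -/
import Mathlib

section
/- Let (f_i) be a sequence of continuous real-valued functions on Cantor space that is rapidly L¹-Cauchy with respect to the fair-coin measure μ. For each n, define A_n = {x ∈ 2^ω : ∃N ≥ 2n+1, ∑_{i=2n+1}^{N} |f_i(x) − f_{i+1}(x)| > 2^{-n}}, and for each k let B_k = 2^ω \ ⋃_{n≥k} A_n. Then on each set B_k the sequence (f_i) converges uniformly with an explicit modulus: for every x ∈ B_k the limit f(x) = lim_i f_i(x) exists, and for all ℓ and all m > 2·max(ℓ, k), |f_m(x) − f(x)| ≤ 2^{-ℓ}. -/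
open MeasureTheory Filter Topology

/-- The cylinder `[p]` determined by a finite binary string `p`. -/
def cylinder (p : List Bool) : Set (ℕ → Bool) :=
  {x | ∀ i, (h : i < p.length) → x i = p.get ⟨i, h⟩}

/-- `μ` is the fair-coin measure on Cantor space `2^ω = ℕ → Bool`. -/
def IsFairCoin (μ : Measure (ℕ → Bool)) : Prop :=
  IsProbabilityMeasure μ ∧ ∀ p : List Bool, μ (cylinder p) = 2⁻¹ ^ p.length

private lemma tele_aux (g : ℕ → ℝ) :
    ∀ b a, a ≤ b → |g a - g b| ≤ ∑ i ∈ Finset.Ico a b, |g i - g (i + 1)| := by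
  intro b
  induction b with
  | zero => intro a ha; interval_cases a; simp
  | succ b ih =>
    intro a ha
    rcases eq_or_lt_of_le ha with h | h
    · subst h; simp
    · have hab : a ≤ b := Nat.lt_succ_iff.mp h
      rw [Finset.sum_Ico_succ_top hab]
      calc |g a - g (b + 1)| ≤ |g a - g b| + |g b - g (b + 1)| := by
            have := abs_sub_le (g a) (g b) (g (b + 1)); linarith [this]
        _ ≤ (∑ i ∈ Finset.Ico a b, |g i - g (i + 1)|) + |g b - g (b + 1)| := by
            linarith [ih a hab]

theorem stmt2 (μ : Measure (ℕ → Bool)) (hμ : IsFairCoin μ)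
    (f : ℕ → (ℕ → Bool) → ℝ) (hf : ∀ i, Continuous (f i))
    (hcauchy : ∀ i, ∫ x, |f i x - f (i + 1) x| ∂μ < (2 : ℝ)⁻¹ ^ i)
    (A : ℕ → Set (ℕ → Bool))
    (hA : ∀ n, A n = {x | ∃ N ≥ 2 * n + 1,
      (∑ i ∈ Finset.Icc (2 * n + 1) N, |f i x - f (i + 1) x|) > (2 : ℝ)⁻¹ ^ n})
    (B : ℕ → Set (ℕ → Bool))
    (hB : ∀ k, B k = (⋃ n, ⋃ _ : n ≥ k, A n)ᶜ) :
    ∀ k, ∀ x ∈ B k, ∃ L : ℝ, Tendsto (fun i => f i x) atTop (𝓝 L) ∧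
      ∀ ℓ m : ℕ, m > 2 * max ℓ k → |f m x - L| ≤ (2 : ℝ)⁻¹ ^ ℓ := by
  intro k x hx
  set g : ℕ → ℝ := fun i => f i x with hg
  -- extract the tail-sum bounds
  have hbound : ∀ n, n ≥ k → ∀ N, N ≥ 2 * n + 1 →
      (∑ i ∈ Finset.Icc (2 * n + 1) N, |g i - g (i + 1)|) ≤ (2 : ℝ)⁻¹ ^ n := by
    intro n hn N hN
    rw [hB] at hx
    have hxA : x ∉ A n := by
      intro hxa
      exact hx (Set.mem_iUnion.mpr ⟨n, Set.mem_iUnion.mpr ⟨hn, hxa⟩⟩)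
    rw [hA] at hxA
    simp only [Set.mem_setOf_eq] at hxA
    push_neg at hxA
    exact hxA N hN
  -- key pointwise bound
  have key : ∀ n, n ≥ k → ∀ a b, 2 * n + 1 ≤ a → a ≤ b →
      |g a - g b| ≤ (2 : ℝ)⁻¹ ^ n := by
    intro n hn a b ha hab
    rcases eq_or_lt_of_le hab with h | h
    · subst h; simp
    · have h1 : |g a - g b| ≤ ∑ i ∈ Finset.Ico a b, |g i - g (i + 1)| :=
        tele_aux g b a hab
      have h2 : (∑ i ∈ Finset.Ico a b, |g i - g (i + 1)|) ≤
          ∑ i ∈ Finset.Icc (2 * n + 1) (b - 1), |g i - g (i + 1)| := by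
        apply Finset.sum_le_sum_of_subset_of_nonneg
        · intro i hi
          simp only [Finset.mem_Ico, Finset.mem_Icc] at *
          exact ⟨le_trans ha hi.1, Nat.le_sub_one_of_lt hi.2⟩
        · intro i _ _; exact abs_nonneg _
      have h3 := hbound n hn (b - 1) (le_trans ha (Nat.le_sub_one_of_lt h))
      linarith
  -- Cauchy
  have hcau : CauchySeq g := by
    rw [Metric.cauchySeq_iff']
    intro ε hε
    obtain ⟨n₀, hn₀⟩ := exists_pow_lt_of_lt_one hε (by norm_num : (2 : ℝ)⁻¹ < 1)
    refine ⟨2 * max n₀ k + 1, fun m hm => ?_⟩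
    have h1 : |g m - g (2 * max n₀ k + 1)| ≤ (2 : ℝ)⁻¹ ^ max n₀ k := by
      rw [abs_sub_comm]
      exact key (max n₀ k) (le_max_right _ _) _ m le_rfl hm
    have h2 : ((2 : ℝ)⁻¹) ^ max n₀ k ≤ (2 : ℝ)⁻¹ ^ n₀ :=
      pow_le_pow_of_le_one (by norm_num) (by norm_num) (le_max_left _ _)
    rw [Real.dist_eq]
    linarith
  obtain ⟨L, hL⟩ := cauchySeq_tendsto_of_complete hcau
  refine ⟨L, hL, ?_⟩
  intro ℓ m hm
  set n := max ℓ k with hn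
  have hmn : 2 * n + 1 ≤ m := hm
  have hlim : Tendsto (fun j => |g m - g j|) atTop (𝓝 |g m - L|) :=
    ((tendsto_const_nhds.sub hL).abs)
  have hle : |g m - L| ≤ (2 : ℝ)⁻¹ ^ n := by
    apply le_of_tendsto hlim
    filter_upwards [eventually_ge_atTop m] with j hj
    exact key n (le_max_right _ _) m j hmn hj
  have h2 : ((2 : ℝ)⁻¹) ^ n ≤ (2 : ℝ)⁻¹ ^ ℓ :=
    pow_le_pow_of_le_one (by norm_num) (by norm_num) (le_max_left _ _)
  linarith
end

section
/- Let f be a bounded μ-integrable real-valued function on Cantor space. Then for μ^{⊗ℕ}-almost every sequence R = (R_j)_{j∈ℕ} of points of 2^ω the following holds: for every finite binary string p, the limit lim_{N→∞} (1/N) ∑_{j<N} f(p⌢R_j) exists and equals 2^{|p|} ∫_{[p]} f dμ (where p⌢R_j ∈ 2^ω is the concatenation of p with R_j); consequently, the functions g^i : 2^ω → ℝ defined by g^i(X) = lim_{N→∞} (1/N) ∑_{j<N} f((X↾i)⌢R_j) are well-defined for every i and every X, and g^i → f in the L¹ norm as i → ∞. -/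
open MeasureTheory Filter Topology

/-- Splitting one fair-coin sequence into countably many independent ones via the
pairing bijection `Nat.pair : ℕ × ℕ ≃ ℕ`.  If `μ` is the fair-coin measure on `2^ω`,
then `μ.map unpack` is exactly the countable product measure `μ^{⊗ℕ}` on `(2^ω)^ℕ`. -/
def unpack (x : ℕ → Bool) : ℕ → ℕ → Bool := fun j n => x (Nat.pair j n)

/-- The concatenation `p⌢y ∈ 2^ω` of a finite binary string `p` with `y ∈ 2^ω`. -/
def concatSeq (p : List Bool) (y : ℕ → Bool) : ℕ → Bool :=
  fun n => if h : n < p.length then p.get ⟨n, h⟩ else y (n - p.length)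

/-- `X↾i`, the length-`i` initial segment of `X ∈ 2^ω`, as a finite binary string. -/
def initSeg (x : ℕ → Bool) (i : ℕ) : List Bool := List.ofFn fun j : Fin i => x j

lemma measurableSet_cylinder (p : List Bool) : MeasurableSet (cylinder p) := by
  have : _root_.cylinder p = ⋂ i : Fin p.length, {x : ℕ → Bool | x i = p.get i} := by
    ext x
    simp only [_root_.cylinder, Set.mem_setOf_eq, Set.mem_iInter]
    exact ⟨fun h i => h i i.2, fun h i hi => h ⟨i, hi⟩⟩
  rw [this]
  exact MeasurableSet.iInter fun i =>
    (measurable_pi_apply (i : ℕ)) (measurableSet_singleton _)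

lemma mem_cylinder_ofFn {m : ℕ} (v : Fin m → Bool) (x : ℕ → Bool) :
    x ∈ _root_.cylinder (List.ofFn v) ↔ ∀ j : Fin m, x j = v j := by
  simp only [_root_.cylinder, Set.mem_setOf_eq]
  constructor
  · intro h j
    have := h j (by simp [List.length_ofFn, j.2])
    rwa [List.get_ofFn] at this
  · intro h i hi
    rw [List.get_ofFn]
    exact h ⟨i, by simpa using hi⟩

lemma cylinder_subset {p q : List Bool} (hpq : p.length ≤ q.length) {x : ℕ → Bool}
    (hxp : x ∈ cylinder p) (hxq : x ∈ cylinder q) : cylinder q ⊆ cylinder p := by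
  intro y hy i hi
  rw [← hxp i hi, hxq i (lt_of_lt_of_le hi hpq), hy i (lt_of_lt_of_le hi hpq)]

lemma isPiSystem_cylinders : IsPiSystem (Set.range cylinder) := by
  rintro _ ⟨p, rfl⟩ _ ⟨q, rfl⟩ ⟨x, hxp, hxq⟩
  rcases le_total p.length q.length with h | h
  · have := cylinder_subset h hxp hxq
    rw [Set.inter_eq_self_of_subset_right this]
    exact ⟨q, rfl⟩
  · have := cylinder_subset h hxq hxp
    rw [Set.inter_eq_self_of_subset_left this]
    exact ⟨p, rfl⟩

lemma generateFrom_cylinders :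
    (inferInstance : MeasurableSpace (ℕ → Bool)) =
      MeasurableSpace.generateFrom (Set.range cylinder) := by
  apply le_antisymm
  · rw [show (inferInstance : MeasurableSpace (ℕ → Bool)) = MeasurableSpace.pi from rfl,
      MeasurableSpace.pi]
    refine iSup_le fun k => ?_
    have key : ∀ c : Bool, MeasurableSet[MeasurableSpace.generateFrom (Set.range _root_.cylinder)]
        ((fun x : ℕ → Bool => x k) ⁻¹' {c}) := by
      intro c
      classical
      have : (fun x : ℕ → Bool => x k) ⁻¹' {c} =
          ⋃ v ∈ (Finset.univ.filter fun v : Fin (k+1) → Bool => v ⟨k, k.lt_succ_self⟩ = c),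
            _root_.cylinder (List.ofFn v) := by
        ext x
        simp only [Set.mem_preimage, Set.mem_singleton_iff, Set.mem_iUnion, Finset.mem_filter,
          Finset.mem_univ, true_and]
        constructor
        · intro h
          exact ⟨fun j => x j, h, (mem_cylinder_ofFn _ _).2 fun j => rfl⟩
        · rintro ⟨v, hv, hx⟩
          rw [(mem_cylinder_ofFn _ _).1 hx ⟨k, k.lt_succ_self⟩, hv]
      rw [this]
      exact (Finset.measurableSet_biUnion _) fun v _ =>
        MeasurableSpace.measurableSet_generateFrom ⟨_, rfl⟩
    intro s hs
    obtain ⟨t, -, rfl⟩ := MeasurableSpace.measurableSet_comap.mp hs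
    have ht : (fun x : ℕ → Bool => x k) ⁻¹' t = ⋃ c ∈ t, (fun x : ℕ → Bool => x k) ⁻¹' {c} := by
      simp
    rw [ht]
    exact MeasurableSet.biUnion t.to_countable fun c _ => key c
  · exact MeasurableSpace.generateFrom_le (by rintro _ ⟨p, rfl⟩; exact measurableSet_cylinder p)

lemma measure_bitEvent {μ : Measure (ℕ → Bool)} (hμ : IsFairCoin μ) (s : Finset ℕ) (b : ℕ → Bool) :
    μ {x : ℕ → Bool | ∀ i ∈ s, x i = b i} = 2⁻¹ ^ s.card := by
  classical
  obtain ⟨m, hs⟩ : ∃ m, ∀ i ∈ s, i < m :=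
    ⟨(s.sup id) + 1, fun i hi => Nat.lt_succ_of_le (Finset.le_sup (f := id) hi)⟩
  set P : (Fin m → Bool) → Prop := fun v => ∀ i, ∀ h : i ∈ s, v ⟨i, hs i h⟩ = b i with hP
  set T : Finset (Fin m → Bool) := Finset.univ.filter P with hT
  have hset : {x : ℕ → Bool | ∀ i ∈ s, x i = b i} = ⋃ v ∈ T, _root_.cylinder (List.ofFn v) := by
    ext x
    simp only [Set.mem_setOf_eq, Set.mem_iUnion, hT, Finset.mem_filter, Finset.mem_univ, true_and]
    constructor
    · intro h
      exact ⟨fun j => x j, fun i hi => h i hi, (mem_cylinder_ofFn _ _).2 fun j => rfl⟩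
    · rintro ⟨v, hv, hx⟩
      intro i hi
      rw [show x i = v ⟨i, hs i hi⟩ from (mem_cylinder_ofFn _ _).1 hx ⟨i, hs i hi⟩]
      exact hv i hi
  have hdisj : (T : Set (Fin m → Bool)).PairwiseDisjoint
      fun v => _root_.cylinder (List.ofFn v) := by
    intro v _ w _ hvw
    refine Set.disjoint_left.2 fun {x} hxv hxw => hvw ?_
    funext j
    rw [← (mem_cylinder_ofFn v x).1 hxv j, (mem_cylinder_ofFn w x).1 hxw j]
  rw [hset, measure_biUnion_finset hdisj fun v _ => measurableSet_cylinder _]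
  have hval : ∀ v : Fin m → Bool, μ (_root_.cylinder (List.ofFn v)) = 2⁻¹ ^ m := fun v => by
    rw [hμ.2, List.length_ofFn]
  rw [Finset.sum_congr rfl fun v _ => hval v, Finset.sum_const, nsmul_eq_mul]
  -- compute the cardinality
  have e : {v : Fin m → Bool // P v} ≃ ({j : Fin m // (j : ℕ) ∉ s} → Bool) :=
    { toFun := fun v j => v.1 j.1
      invFun := fun w => ⟨fun j => if h : (j : ℕ) ∈ s then b j else w ⟨j, h⟩,
        fun i h => by simp [h]⟩
      left_inv := fun v => by
        apply Subtype.ext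
        funext j
        by_cases h : (j : ℕ) ∈ s
        · simpa [h] using (v.2 j h).symm
        · simp [h]
      right_inv := fun w => by
        funext j
        simp [j.2] }
  have e2 : {j : Fin m // (j : ℕ) ∈ s} ≃ {i : ℕ // i ∈ s} :=
    { toFun := fun j => ⟨j.1, j.2⟩
      invFun := fun i => ⟨⟨i.1, hs i.1 i.2⟩, i.2⟩
      left_inv := fun j => rfl
      right_inv := fun i => rfl }
  have hc1 : Fintype.card {j : Fin m // (j : ℕ) ∈ s} = s.card := by
    rw [Fintype.card_congr e2]
    exact Fintype.card_coe s
  have hsm : s.card ≤ m := by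
    rw [← hc1]
    simpa using Fintype.card_subtype_le (fun j : Fin m => (j : ℕ) ∈ s)
  have hcard : T.card = 2 ^ (m - s.card) := by
    rw [hT, ← Fintype.card_subtype, Fintype.card_congr e, Fintype.card_fun,
      Fintype.card_subtype_compl, hc1, Fintype.card_bool, Fintype.card_fin]
  rw [hcard]
  have h2 : ((2 ^ (m - s.card) : ℕ) : ENNReal) = 2 ^ (m - s.card) := by push_cast; ring
  rw [h2, show (2⁻¹ : ENNReal) ^ m = 2⁻¹ ^ (m - s.card) * 2⁻¹ ^ s.card by
      rw [← pow_add, Nat.sub_add_cancel hsm],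
    ← mul_assoc, ← mul_pow, ENNReal.mul_inv_cancel (by norm_num) (by norm_num), one_pow, one_mul]


lemma measurable_concatSeq (p : List Bool) : Measurable (concatSeq p) := by
  apply measurable_pi_lambda
  intro n
  unfold concatSeq
  by_cases h : n < p.length
  · simpa [h] using measurable_const
  · simpa [h] using measurable_pi_apply (n - p.length)

lemma measurable_unpack : Measurable unpack :=
  measurable_pi_lambda _ fun _ => measurable_pi_lambda _ fun _ => measurable_pi_apply _

lemma pow_half_arith (n m : ℕ) (h : n ≤ m) :
    (2⁻¹ : ENNReal) ^ (m - n) = 2 ^ n * 2⁻¹ ^ m := by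
  rw [show (2⁻¹ : ENNReal) ^ m = 2⁻¹ ^ n * 2⁻¹ ^ (m - n) by rw [← pow_add, Nat.add_sub_cancel' h],
    ← mul_assoc, ← mul_pow, ENNReal.mul_inv_cancel (by norm_num) (by norm_num), one_pow, one_mul]

lemma map_concatSeq {μ : Measure (ℕ → Bool)} (hμ : IsFairCoin μ) (p : List Bool) :
    μ.map (concatSeq p) = (2 : ENNReal) ^ p.length • μ.restrict (_root_.cylinder p) := by
  haveI := hμ.1
  haveI : IsProbabilityMeasure (μ.map (concatSeq p)) :=
    Measure.isProbabilityMeasure_map (measurable_concatSeq p).aemeasurable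
  refine ext_of_generate_finite _ generateFrom_cylinders isPiSystem_cylinders ?_ ?_
  · rintro _ ⟨q, rfl⟩
    rw [Measure.map_apply (measurable_concatSeq p) (measurableSet_cylinder q),
      Measure.smul_apply, Measure.restrict_apply (measurableSet_cylinder q), smul_eq_mul]
    by_cases hpq : ∀ i (h1 : i < p.length) (h2 : i < q.length), p.get ⟨i, h1⟩ = q.get ⟨i, h2⟩
    · by_cases hmn : q.length ≤ p.length
      · have h1 : concatSeq p ⁻¹' _root_.cylinder q = Set.univ := by
          rw [Set.eq_univ_iff_forall]
          intro y i hi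
          have hip : i < p.length := lt_of_lt_of_le hi hmn
          show (if h : i < p.length then p.get ⟨i, h⟩ else y (i - p.length)) = q.get ⟨i, hi⟩
          rw [dif_pos hip]
          exact hpq i hip hi
        have h2 : _root_.cylinder q ∩ _root_.cylinder p = _root_.cylinder p := by
          apply Set.inter_eq_self_of_subset_right
          intro x hx i hi
          rw [hx i (lt_of_lt_of_le hi hmn)]
          exact hpq i (lt_of_lt_of_le hi hmn) hi
        rw [h1, h2, hμ.2, measure_univ, ← mul_pow,
          ENNReal.mul_inv_cancel (by norm_num) (by norm_num), one_pow]
      · push_neg at hmn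
        have h1 : concatSeq p ⁻¹' _root_.cylinder q = _root_.cylinder (q.drop p.length) := by
          ext y
          constructor
          · intro hy i hi
            have hi' : p.length + i < q.length := by simp at hi; omega
            have h3 := hy (p.length + i) hi'
            show y i = (q.drop p.length).get ⟨i, hi⟩
            simp only [List.get_eq_getElem, List.getElem_drop]
            simp only [List.get_eq_getElem] at h3
            rw [← h3]
            show y i = (if h : p.length + i < p.length then p.get ⟨p.length + i, h⟩
              else y (p.length + i - p.length))
            rw [dif_neg (by omega), Nat.add_sub_cancel_left]
          · intro hy i hi
            show (if h : i < p.length then p.get ⟨i, h⟩ else y (i - p.length)) = q.get ⟨i, hi⟩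
            by_cases h : i < p.length
            · rw [dif_pos h]; exact hpq i h hi
            · rw [dif_neg h]
              have hi2 : i - p.length < (q.drop p.length).length := by simp; omega
              rw [hy (i - p.length) hi2]
              simp only [List.get_eq_getElem, List.getElem_drop]
              congr 1
              omega
        have h2 : _root_.cylinder q ∩ _root_.cylinder p = _root_.cylinder q := by
          apply Set.inter_eq_self_of_subset_left
          intro x hx i hi
          rw [hx i (lt_trans hi hmn)]
          exact (hpq i hi (lt_trans hi hmn)).symm
        rw [h1, h2, hμ.2, hμ.2, List.length_drop, pow_half_arith p.length q.length (le_of_lt hmn)]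
    · push_neg at hpq
      obtain ⟨i, h1, h2, hne⟩ := hpq
      have hpre : concatSeq p ⁻¹' _root_.cylinder q = ∅ := by
        rw [Set.eq_empty_iff_forall_notMem]
        intro y hy
        have := hy i h2
        rw [show concatSeq p y i = p.get ⟨i, h1⟩ from dif_pos h1] at this
        exact hne this
      have hint : _root_.cylinder q ∩ _root_.cylinder p = ∅ := by
        rw [Set.eq_empty_iff_forall_notMem]
        rintro x ⟨hxq, hxp⟩
        exact hne ((hxp i h1).symm.trans (hxq i h2))
      rw [hpre, hint]
      simp
  · rw [Measure.map_apply (measurable_concatSeq p) MeasurableSet.univ, Set.preimage_univ,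
      Measure.smul_apply, Measure.restrict_apply MeasurableSet.univ, Set.univ_inter,
      hμ.2, smul_eq_mul, ← mul_pow, ENNReal.mul_inv_cancel (by norm_num) (by norm_num), one_pow]
    exact measure_univ

lemma measurable_unpack_coord (j : ℕ) : Measurable (fun x : ℕ → Bool => unpack x j) :=
  measurable_pi_lambda _ fun _ => measurable_pi_apply _

lemma getD_eq_get' (q : List Bool) {n : ℕ} (h : n < q.length) :
    q.getD n default = q.get ⟨n, h⟩ := by
  simp [List.getD_eq_getElem?_getD, List.getElem?_eq_getElem h]

lemma unpack_preimage_coord (q : List Bool) (j : ℕ) :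
    (fun x : ℕ → Bool => unpack x j) ⁻¹' _root_.cylinder q =
      {x : ℕ → Bool | ∀ k ∈ (Finset.range q.length).image (Nat.pair j),
        x k = q.getD (Nat.unpair k).2 default} := by
  ext x
  simp only [Set.mem_preimage, Set.mem_setOf_eq, Finset.mem_image, Finset.mem_range]
  constructor
  · rintro hx k ⟨n, hn, rfl⟩
    rw [Nat.unpair_pair, getD_eq_get' q hn]
    exact hx n hn
  · intro hx n hn
    have := hx (Nat.pair j n) ⟨n, hn, rfl⟩
    rwa [Nat.unpair_pair, getD_eq_get' q hn] at this

lemma map_unpackCoord {μ : Measure (ℕ → Bool)} (hμ : IsFairCoin μ) (j : ℕ) :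
    μ.map (fun x => unpack x j) = μ := by
  haveI := hμ.1
  haveI : IsProbabilityMeasure (μ.map (fun x => unpack x j)) :=
    Measure.isProbabilityMeasure_map (measurable_unpack_coord j).aemeasurable
  refine ext_of_generate_finite _ generateFrom_cylinders isPiSystem_cylinders ?_ (by
    simp [measure_univ])
  rintro _ ⟨q, rfl⟩
  rw [Measure.map_apply (measurable_unpack_coord j) (measurableSet_cylinder q),
    unpack_preimage_coord, measure_bitEvent hμ, hμ.2,
    Finset.card_image_of_injective _ (fun a b hab => (Nat.pair_eq_pair.mp hab).2),
    Finset.card_range]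

lemma map_coord_unpack {μ : Measure (ℕ → Bool)} (hμ : IsFairCoin μ) (k : ℕ) :
    (μ.map unpack).map (fun R : ℕ → ℕ → Bool => R k) = μ := by
  rw [Measure.map_map (measurable_pi_apply k) measurable_unpack]
  exact map_unpackCoord hμ k

lemma coord_preimage_measure {μ : Measure (ℕ → Bool)} (hμ : IsFairCoin μ) (k : ℕ)
    (q : List Bool) :
    (μ.map unpack) ((fun R : ℕ → ℕ → Bool => R k) ⁻¹' _root_.cylinder q) =
      2⁻¹ ^ q.length := by
  rw [← Measure.map_apply (measurable_pi_apply k) (measurableSet_cylinder q),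
    map_coord_unpack hμ, hμ.2]

lemma indepFun_coords {μ : Measure (ℕ → Bool)} (hμ : IsFairCoin μ) {i j : ℕ} (hij : i ≠ j) :
    ProbabilityTheory.IndepFun (fun R : ℕ → ℕ → Bool => R i) (fun R : ℕ → ℕ → Bool => R j)
      (μ.map unpack) := by
  classical
  haveI := hμ.1
  haveI : IsProbabilityMeasure (μ.map unpack) :=
    Measure.isProbabilityMeasure_map measurable_unpack.aemeasurable
  rw [ProbabilityTheory.IndepFun_iff_Indep]
  have hgen : ∀ k : ℕ, MeasurableSpace.comap (fun R : ℕ → ℕ → Bool => R k)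
      (inferInstance : MeasurableSpace (ℕ → Bool)) =
      MeasurableSpace.generateFrom
        ((Set.preimage (fun R : ℕ → ℕ → Bool => R k)) '' Set.range _root_.cylinder) := by
    intro k
    conv_lhs => rw [generateFrom_cylinders]
    rw [MeasurableSpace.comap_generateFrom]
  refine ProbabilityTheory.IndepSets.indep
    (measurable_iff_comap_le.mp (measurable_pi_apply i))
    (measurable_iff_comap_le.mp (measurable_pi_apply j))
    (isPiSystem_cylinders.comap _) (isPiSystem_cylinders.comap _) (hgen i) (hgen j)
    ((ProbabilityTheory.IndepSets_iff _ _ _).2 ?_)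
  rintro t1 t2 ⟨_, ⟨q1, rfl⟩, rfl⟩ ⟨_, ⟨q2, rfl⟩, rfl⟩
  rw [coord_preimage_measure hμ i q1, coord_preimage_measure hμ j q2,
    Measure.map_apply measurable_unpack
      (((measurable_pi_apply i) (measurableSet_cylinder q1)).inter
        ((measurable_pi_apply j) (measurableSet_cylinder q2)))]
  have hpre : unpack ⁻¹' ((fun R : ℕ → ℕ → Bool => R i) ⁻¹' _root_.cylinder q1 ∩
      (fun R : ℕ → ℕ → Bool => R j) ⁻¹' _root_.cylinder q2) =
      {x : ℕ → Bool | ∀ k ∈ (Finset.range q1.length).image (Nat.pair i) ∪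
          (Finset.range q2.length).image (Nat.pair j),
        x k = (if (Nat.unpair k).1 = i then q1.getD (Nat.unpair k).2 default
          else q2.getD (Nat.unpair k).2 default)} := by
    ext x
    simp only [Set.preimage_inter, Set.mem_inter_iff, Set.mem_preimage, Set.mem_setOf_eq,
      Finset.mem_union, Finset.mem_image, Finset.mem_range]
    constructor
    · rintro ⟨h1, h2⟩ k (⟨n, hn, rfl⟩ | ⟨n, hn, rfl⟩)
      · rw [Nat.unpair_pair]
        simp only [if_pos rfl]
        rw [getD_eq_get' q1 hn]
        exact h1 n hn
      · rw [Nat.unpair_pair]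
        simp only [if_neg hij.symm]
        rw [getD_eq_get' q2 hn]
        exact h2 n hn
    · intro hx
      constructor
      · intro n hn
        have := hx (Nat.pair i n) (Or.inl ⟨n, hn, rfl⟩)
        rwa [Nat.unpair_pair, if_pos rfl, getD_eq_get' q1 hn] at this
      · intro n hn
        have := hx (Nat.pair j n) (Or.inr ⟨n, hn, rfl⟩)
        rwa [Nat.unpair_pair, if_neg hij.symm, getD_eq_get' q2 hn] at this
  rw [hpre, measure_bitEvent hμ]
  have hdisj : Disjoint ((Finset.range q1.length).image (Nat.pair i))
      ((Finset.range q2.length).image (Nat.pair j)) := by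
    rw [Finset.disjoint_left]
    rintro k hk1 hk2
    simp only [Finset.mem_image, Finset.mem_range] at hk1 hk2
    obtain ⟨n, -, rfl⟩ := hk1
    obtain ⟨n', -, he⟩ := hk2
    exact hij ((Nat.pair_eq_pair.mp he).1.symm)
  rw [Finset.card_union_of_disjoint hdisj,
    Finset.card_image_of_injective _ (fun a b hab => (Nat.pair_eq_pair.mp hab).2),
    Finset.card_image_of_injective _ (fun a b hab => (Nat.pair_eq_pair.mp hab).2),
    Finset.card_range, Finset.card_range, pow_add]

lemma part1 {μ : Measure (ℕ → Bool)} (hμ : IsFairCoin μ) (f : (ℕ → Bool) → ℝ)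
    (hfint : Integrable f μ) (M : ℝ) (hbd : ∀ x, |f x| ≤ M) (p : List Bool) :
    ∀ᵐ R ∂(μ.map unpack), Tendsto
      (fun N : ℕ => (∑ j ∈ Finset.range N, f (concatSeq p (R j))) / N) atTop
      (𝓝 ((2 : ℝ) ^ p.length * ∫ y in _root_.cylinder p, f y ∂μ)) := by
  haveI := hμ.1
  haveI : IsProbabilityMeasure (μ.map unpack) :=
    Measure.isProbabilityMeasure_map measurable_unpack.aemeasurable
  set ν := μ.map unpack with hν
  set f' := hfint.1.mk f with hf'
  have hf'm : StronglyMeasurable f' := hfint.1.stronglyMeasurable_mk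
  have hff' : f =ᵐ[μ] f' := hfint.1.ae_eq_mk
  set X : ℕ → (ℕ → ℕ → Bool) → ℝ := fun j R => f' (concatSeq p (R j)) with hX
  have hφ : Measurable (fun y : ℕ → Bool => f' (concatSeq p y)) :=
    hf'm.measurable.comp (measurable_concatSeq p)
  have hXmeas : ∀ j, Measurable (X j) := fun j => hφ.comp (measurable_pi_apply j)
  have hmapj : ∀ j, ν.map (fun R : ℕ → ℕ → Bool => concatSeq p (R j)) =
      μ.map (concatSeq p) := fun j => by
    rw [show (fun R : ℕ → ℕ → Bool => concatSeq p (R j)) =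
        (concatSeq p) ∘ (fun R : ℕ → ℕ → Bool => R j) from rfl,
      ← Measure.map_map (measurable_concatSeq p) (measurable_pi_apply j),
      map_coord_unpack hμ j]
  have hac : μ.map (concatSeq p) ≪ μ := by
    rw [map_concatSeq hμ p]
    refine Measure.AbsolutelyContinuous.mk fun A hA h0 => ?_
    rw [Measure.smul_apply, Measure.restrict_apply hA, smul_eq_mul]
    have hz : μ (A ∩ _root_.cylinder p) = 0 :=
      le_antisymm (h0 ▸ measure_mono Set.inter_subset_left) zero_le
    rw [hz, mul_zero]
  have hffmap : f =ᵐ[μ.map (concatSeq p)] f' := hff'.filter_mono hac.ae_le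
  have hXint : Integrable (X 0) ν := by
    refine ⟨(hXmeas 0).aestronglyMeasurable, ?_⟩
    apply HasFiniteIntegral.of_bounded (C := M)
    have hb' : ∀ᵐ z ∂(ν.map (fun R : ℕ → ℕ → Bool => concatSeq p (R 0))), ‖f' z‖ ≤ M := by
      rw [hmapj 0]
      filter_upwards [hffmap] with z hz
      rw [← hz, Real.norm_eq_abs]
      exact hbd z
    exact ae_of_ae_map ((measurable_concatSeq p).comp (measurable_pi_apply 0)).aemeasurable hb'
  have hpair : Pairwise (Function.onFun (ProbabilityTheory.IndepFun · · ν) X) := fun i j hij =>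
    (indepFun_coords hμ hij).comp hφ hφ
  have hident : ∀ j, ProbabilityTheory.IdentDistrib (X j) (X 0) ν ν := fun j =>
    ⟨(hXmeas j).aemeasurable, (hXmeas 0).aemeasurable, by
      rw [show X j = (fun y : ℕ → Bool => f' (concatSeq p y)) ∘ (fun R : ℕ → ℕ → Bool => R j)
          from rfl,
        show X 0 = (fun y : ℕ → Bool => f' (concatSeq p y)) ∘ (fun R : ℕ → ℕ → Bool => R 0)
          from rfl,
        ← Measure.map_map hφ (measurable_pi_apply j),
        ← Measure.map_map hφ (measurable_pi_apply 0),
        map_coord_unpack hμ j, map_coord_unpack hμ 0]⟩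
  have hslln := ProbabilityTheory.strong_law_ae_real X hXint hpair hident
  have hEx : ∫ R, X 0 R ∂ν = (2 : ℝ) ^ p.length * ∫ y in _root_.cylinder p, f y ∂μ := by
    have h1 : ∫ R, X 0 R ∂ν =
        ∫ z, f' z ∂(ν.map (fun R : ℕ → ℕ → Bool => concatSeq p (R 0))) :=
      (integral_map ((measurable_concatSeq p).comp (measurable_pi_apply 0)).aemeasurable
        hf'm.aestronglyMeasurable).symm
    rw [h1, hmapj 0, map_concatSeq hμ p, integral_smul_measure,
      ← integral_congr_ae (ae_restrict_of_ae hff'), ENNReal.toReal_pow, ENNReal.toReal_ofNat,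
      smul_eq_mul]
  have hXeq : ∀ᵐ R ∂ν, ∀ j, f (concatSeq p (R j)) = f' (concatSeq p (R j)) := by
    rw [ae_all_iff]
    intro j
    refine ae_of_ae_map ((measurable_concatSeq p).comp (measurable_pi_apply j)).aemeasurable
      (p := fun z => f z = f' z) ?_
    rw [show concatSeq p ∘ (fun a : ℕ → ℕ → Bool => a j) =
      fun R : ℕ → ℕ → Bool => concatSeq p (R j) from rfl, hmapj j]
    exact hffmap
  filter_upwards [hslln, hXeq] with R h1 h2
  have hfun : (fun N : ℕ => (∑ j ∈ Finset.range N, f (concatSeq p (R j))) / N) =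
      fun N : ℕ => (∑ j ∈ Finset.range N, X j R) / N := by
    funext N
    congr 1
    exact Finset.sum_congr rfl fun j _ => h2 j
  rw [hfun, ← hEx]
  exact h1

noncomputable def Gfun (μ : Measure (ℕ → Bool)) (f : (ℕ → Bool) → ℝ) (i : ℕ) :
    (ℕ → Bool) → ℝ :=
  fun x => 2 ^ i * ∫ y in _root_.cylinder (initSeg x i), f y ∂μ

def ℱcantor : Filtration ℕ (inferInstance : MeasurableSpace (ℕ → Bool)) where
  seq i := MeasurableSpace.comap (fun x : ℕ → Bool => fun j : Fin i => x (j : ℕ)) inferInstance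
  mono' := by
    intro i k h
    show MeasurableSpace.comap (fun x : ℕ → Bool => fun j : Fin i => x (j : ℕ)) inferInstance ≤
      MeasurableSpace.comap (fun x : ℕ → Bool => fun j : Fin k => x (j : ℕ)) inferInstance
    have he : (fun x : ℕ → Bool => fun j : Fin i => x (j : ℕ)) =
        (fun v : Fin k → Bool => fun j : Fin i => v (Fin.castLE h j)) ∘
          (fun x : ℕ → Bool => fun j : Fin k => x (j : ℕ)) := rfl
    rw [he, ← MeasurableSpace.comap_comp]
    exact MeasurableSpace.comap_mono (measurable_iff_comap_le.mp
      (measurable_pi_lambda _ fun j => measurable_pi_apply _))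
  le' i := measurable_iff_comap_le.mp (measurable_pi_lambda _ fun j => measurable_pi_apply _)

lemma le_iSup_filtration :
    (inferInstance : MeasurableSpace (ℕ → Bool)) ≤ ⨆ i, ℱcantor i := by
  refine le_trans (le_of_eq generateFrom_cylinders) ?_
  refine MeasurableSpace.generateFrom_le ?_
  rintro _ ⟨p, rfl⟩
  have hmem : MeasurableSet[ℱcantor p.length] (_root_.cylinder p) := by
    refine MeasurableSpace.measurableSet_comap.mpr
      ⟨{v : Fin p.length → Bool | ∀ j : Fin p.length, v j = p.get j}, .of_discrete, ?_⟩
    ext x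
    simp only [Set.mem_preimage, Set.mem_setOf_eq]
    exact ⟨fun h i hi => h ⟨i, hi⟩, fun h j => h j j.2⟩
  exact (le_iSup (fun i => (ℱcantor i : MeasurableSpace (ℕ → Bool))) p.length) _ hmem

lemma part2 {μ : Measure (ℕ → Bool)} (hμ : IsFairCoin μ) (f : (ℕ → Bool) → ℝ)
    (hfint : Integrable f μ) (M : ℝ) (hbd : ∀ x, |f x| ≤ M) :
    Tendsto (fun i => ∫ x, |Gfun μ f i x - f x| ∂μ) atTop (𝓝 0) := by
  classical
  haveI := hμ.1
  have hM0 : 0 ≤ M := le_trans (abs_nonneg _) (hbd fun _ => true)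
  have hproj : ∀ i, @Measurable _ _ (ℱcantor i) _
      (fun x : ℕ → Bool => fun j : Fin i => x (j : ℕ)) :=
    fun i => measurable_iff_comap_le.mpr le_rfl
  have hGeq : ∀ i, Gfun μ f i =
      (fun v : Fin i → Bool => 2 ^ i * ∫ y in _root_.cylinder (List.ofFn v), f y ∂μ) ∘
        (fun x : ℕ → Bool => fun j : Fin i => x (j : ℕ)) := fun i => rfl
  have hGm : ∀ i, @Measurable _ _ (ℱcantor i) _ (Gfun μ f i) := fun i => by
    rw [hGeq i]
    exact Measurable.of_discrete.comp (hproj i)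
  have hcylval : ∀ i (v : Fin i → Bool), μ (_root_.cylinder (List.ofFn v)) = 2⁻¹ ^ i := by
    intro i v
    rw [hμ.2, List.length_ofFn]
  have htoReal : ∀ i : ℕ, ((2⁻¹ : ENNReal) ^ i).toReal = (2⁻¹ : ℝ) ^ i := by
    intro i
    rw [ENNReal.toReal_pow, ENNReal.toReal_inv, ENNReal.toReal_ofNat]
  have hGbd : ∀ i x, |Gfun μ f i x| ≤ M := by
    intro i x
    have hlen : (initSeg x i).length = i := List.length_ofFn
    have h1 : |∫ y in _root_.cylinder (initSeg x i), f y ∂μ| ≤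
        M * (μ (_root_.cylinder (initSeg x i))).toReal := by
      rw [← Real.norm_eq_abs]
      exact norm_setIntegral_le_of_norm_le_const (measure_lt_top μ _)
        (fun y _ => (Real.norm_eq_abs _).symm ▸ hbd y)
    rw [Gfun, abs_mul, abs_pow, abs_two]
    calc (2 : ℝ) ^ i * |∫ y in _root_.cylinder (initSeg x i), f y ∂μ|
        ≤ 2 ^ i * (M * (μ (_root_.cylinder (initSeg x i))).toReal) := by
          exact mul_le_mul_of_nonneg_left h1 (by positivity)
      _ = M := by
          rw [hμ.2, hlen, htoReal, mul_comm M, ← mul_assoc, ← mul_pow]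
          norm_num
  have hGint : ∀ i, Integrable (Gfun μ f i) μ := by
    intro i
    refine ⟨(((hGm i).mono (ℱcantor.le i) le_rfl).stronglyMeasurable).aestronglyMeasurable, ?_⟩
    exact HasFiniteIntegral.of_bounded (C := M)
      (Filter.Eventually.of_forall fun x => (Real.norm_eq_abs _).symm ▸ hGbd i x)
  have hfiber : ∀ i (v : Fin i → Bool),
      (fun x : ℕ → Bool => fun j : Fin i => x (j : ℕ)) ⁻¹' {v} =
        _root_.cylinder (List.ofFn v) := by
    intro i v
    ext x
    simp only [Set.mem_preimage, Set.mem_singleton_iff]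
    rw [mem_cylinder_ofFn]
    exact ⟨fun h j => congrFun h j, fun h => funext h⟩
  have hGcond : ∀ i, Gfun μ f i =ᵐ[μ] μ[f | ℱcantor i] := by
    intro i
    refine ae_eq_condExp_of_forall_setIntegral_eq (ℱcantor.le i) hfint
      (fun s _ _ => (hGint i).integrableOn) ?_
      ((hGm i).stronglyMeasurable.aestronglyMeasurable)
    intro s hs _
    obtain ⟨t, -, rfl⟩ := MeasurableSpace.measurableSet_comap.mp hs
    have hsu : (fun x : ℕ → Bool => fun j : Fin i => x (j : ℕ)) ⁻¹' t =
        ⋃ v ∈ t.toFinset, _root_.cylinder (List.ofFn v) := by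
      ext x
      simp only [Set.mem_preimage, Set.mem_iUnion]
      constructor
      · intro h
        exact ⟨_, Set.mem_toFinset.2 h, (mem_cylinder_ofFn _ _).2 fun j => rfl⟩
      · rintro ⟨v, hv, hxv⟩
        have hxe : (fun j : Fin i => x (j : ℕ)) = v :=
          funext fun j => (mem_cylinder_ofFn v x).1 hxv j
        rw [hxe]
        exact Set.mem_toFinset.1 hv
    have hdisj : Set.Pairwise (↑t.toFinset)
        (Function.onFun Disjoint fun v : Fin i → Bool => _root_.cylinder (List.ofFn v)) := by
      intro v _ w _ hvw
      refine Set.disjoint_left.2 fun {x} hxv hxw => hvw ?_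
      funext j
      rw [← (mem_cylinder_ofFn v x).1 hxv j, (mem_cylinder_ofFn w x).1 hxw j]
    rw [hsu, integral_biUnion_finset _ (fun v _ => measurableSet_cylinder _) hdisj
        (fun v _ => (hGint i).integrableOn),
      integral_biUnion_finset _ (fun v _ => measurableSet_cylinder _) hdisj
        (fun v _ => hfint.integrableOn)]
    refine Finset.sum_congr rfl fun v _ => ?_
    have hconst : Set.EqOn (Gfun μ f i)
        (fun _ => 2 ^ i * ∫ y in _root_.cylinder (List.ofFn v), f y ∂μ)
        (_root_.cylinder (List.ofFn v)) := by
      intro x hx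
      have : initSeg x i = List.ofFn v :=
        congrArg List.ofFn (funext fun j => (mem_cylinder_ofFn v x).1 hx j)
      simp only [Gfun, this]
    rw [setIntegral_congr_fun (measurableSet_cylinder _) hconst, setIntegral_const,
      Measure.real, hcylval i v, htoReal, smul_eq_mul, ← mul_assoc, ← mul_pow]
    norm_num
  set f' := hfint.1.mk f with hf'
  have hf'm : StronglyMeasurable f' := hfint.1.stronglyMeasurable_mk
  have hff' : f =ᵐ[μ] f' := hfint.1.ae_eq_mk
  have hf'int : Integrable f' μ := hfint.congr hff'
  have hlevy := hf'int.tendsto_eLpNorm_condExp (ℱ := ℱcantor)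
    (hf'm.mono le_iSup_filtration)
  have hnorm : ∀ i, ∫ x, |Gfun μ f i x - f x| ∂μ =
      (eLpNorm (Gfun μ f i - f) 1 μ).toReal := by
    intro i
    rw [eLpNorm_one_eq_lintegral_enorm,
      ← integral_norm_eq_lintegral_enorm ((hGint i).sub hfint).1]
    simp [Real.norm_eq_abs]
  have hcong : ∀ i, eLpNorm (Gfun μ f i - f) 1 μ =
      eLpNorm (μ[f' | ℱcantor i] - f') 1 μ := by
    intro i
    apply eLpNorm_congr_ae
    have h1 : μ[f | ℱcantor i] =ᵐ[μ] μ[f' | ℱcantor i] := condExp_congr_ae hff'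
    filter_upwards [hGcond i, h1, hff'] with x hx1 hx2 hx3
    simp only [Pi.sub_apply]
    rw [hx1, hx2, hx3]
  have hT := (ENNReal.tendsto_toReal (by norm_num : (0 : ENNReal) ≠ ⊤)).comp hlevy
  simp only [ENNReal.toReal_zero] at hT
  refine hT.congr fun i => ?_
  rw [Function.comp_apply, ← hcong i, ← hnorm i]

theorem stmt7 (μ : Measure (ℕ → Bool)) (hμ : IsFairCoin μ)
    (f : (ℕ → Bool) → ℝ) (hfint : Integrable f μ)
    (M : ℝ) (hbd : ∀ x, |f x| ≤ M) :
    ∀ᵐ R ∂(μ.map unpack),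
      (∀ p : List Bool, Tendsto
        (fun N : ℕ => (∑ j ∈ Finset.range N, f (concatSeq p (R j))) / N) atTop
        (𝓝 ((2 : ℝ) ^ p.length * ∫ y in cylinder p, f y ∂μ))) ∧
      (∀ g : ℕ → (ℕ → Bool) → ℝ,
        (∀ i X, Tendsto
          (fun N : ℕ => (∑ j ∈ Finset.range N, f (concatSeq (initSeg X i) (R j))) / N)
          atTop (𝓝 (g i X))) →
        Tendsto (fun i => ∫ x, |g i x - f x| ∂μ) atTop (𝓝 0)) := by
  haveI := hμ.1
  have hall : ∀ᵐ R ∂(μ.map unpack), ∀ p : List Bool, Tendsto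
      (fun N : ℕ => (∑ j ∈ Finset.range N, f (concatSeq p (R j))) / N) atTop
      (𝓝 ((2 : ℝ) ^ p.length * ∫ y in _root_.cylinder p, f y ∂μ)) :=
    ae_all_iff.2 fun p => part1 hμ f hfint M hbd p
  filter_upwards [hall] with R hR
  refine ⟨hR, ?_⟩
  intro g hg
  have hgeq : ∀ i, (fun x => |g i x - f x|) = fun x => |Gfun μ f i x - f x| := by
    intro i
    funext X
    have h1 := hg i X
    have h2 := hR (initSeg X i)
    have hlen : (initSeg X i).length = i := List.length_ofFn
    rw [hlen] at h2
    rw [tendsto_nhds_unique h1 h2]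
    rfl
  refine Tendsto.congr (fun i => ?_) (part2 hμ f hfint M hbd)
  rw [← hgeq i]
end
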